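/- arXiv:2401.02815 — 3 statements merged into one kernel-verified Lean document; each statement's English description precedes it below -/
import Mathlib

section
/- Let (X_n)_{n∈ℕ} be i.i.d. real random variables with common cumulative distribution function F_X, and let (Y_n) be real random variables on the same probability space with Y_n → 0 almost surely as n → ∞. Then for every point of continuity υ of F_X, (1/n) Σ_{ℓ=1}^n 1{X_ℓ + Y_n ≤ υ} → F_X(υ) almost surely as n → ∞. -/
open MeasureTheory ProbabilityTheory Filter

lemma ecdf_slln_aux
    {Ω : Type*} [MeasurableSpace Ω] (μ : Measure Ω) [IsProbabilityMeasure μ]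
    (X : ℕ → Ω → ℝ) (hXmeas : ∀ n, Measurable (X n))
    (hXindep : iIndepFun X μ)
    (hXident : ∀ n, μ.map (X n) = μ.map (X 0)) (t : ℝ) :
    ∀ᵐ ω ∂μ, Tendsto
      (fun n : ℕ => ((n : ℝ))⁻¹ * ∑ ℓ ∈ Finset.range n, if X ℓ ω ≤ t then (1 : ℝ) else 0)
      atTop (nhds ((μ {ω | X 0 ω ≤ t}).toReal)) := by
  set g : ℝ → ℝ := fun x => if x ≤ t then 1 else 0 with hgdef
  have hg : Measurable g := Measurable.ite measurableSet_Iic measurable_const measurable_const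
  have hZind : ∀ ℓ, (fun ω => if X ℓ ω ≤ t then (1:ℝ) else 0)
      = ({ω | X ℓ ω ≤ t}).indicator (fun _ => (1:ℝ)) := by
    intro ℓ; ext ω; by_cases h : X ℓ ω ≤ t <;> simp [Set.indicator, h]
  have hset : ∀ ℓ, MeasurableSet {ω | X ℓ ω ≤ t} := fun ℓ => (hXmeas ℓ) measurableSet_Iic
  have hint : Integrable (fun ω => g (X 0 ω)) μ := by
    have : (fun ω => g (X 0 ω)) = ({ω | X 0 ω ≤ t}).indicator (fun _ => (1:ℝ)) := hZind 0
    rw [this]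
    exact (integrable_const (1:ℝ)).indicator (hset 0)
  have hindep : Pairwise (Function.onFun (IndepFun · · μ) (fun ℓ ω => g (X ℓ ω))) := by
    intro i j hij
    exact (hXindep.indepFun hij).comp hg hg
  have hident : ∀ i, IdentDistrib (fun ω => g (X i ω)) (fun ω => g (X 0 ω)) μ μ := by
    intro i
    exact (IdentDistrib.comp ⟨(hXmeas i).aemeasurable, (hXmeas 0).aemeasurable, hXident i⟩ hg)
  have hSLLN := strong_law_ae_real (fun ℓ ω => g (X ℓ ω)) hint hindep hident
  have hmean : μ[fun ω => g (X 0 ω)] = (μ {ω | X 0 ω ≤ t}).toReal := by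
    rw [hZind 0, integral_indicator_const (1:ℝ) (hset 0)]
    simp [Measure.real]
  rw [hmean] at hSLLN
  filter_upwards [hSLLN] with ω hω
  convert hω using 2 with n
  rw [div_eq_inv_mul]

/-- let `(X_n)` be i.i.d. real random variables with common c.d.f.
`F`, and let `Y_n → 0` a.s. Then for every continuity point `υ` of `F`, the perturbed
empirical c.d.f. `(1/n) Σ_{ℓ<n} 1{X_ℓ + Y_n ≤ υ}` converges a.s. to `F(υ)`. -/
theorem perturbed_ecdf_tendsto_ae
    {Ω : Type*} [MeasurableSpace Ω] (μ : Measure Ω) [IsProbabilityMeasure μ]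
    (X : ℕ → Ω → ℝ) (hXmeas : ∀ n, Measurable (X n))
    (hXindep : iIndepFun X μ)
    (hXident : ∀ n, μ.map (X n) = μ.map (X 0))
    (F : ℝ → ℝ) (hF : ∀ t, F t = (μ {ω | X 0 ω ≤ t}).toReal)
    (Y : ℕ → Ω → ℝ)
    (hY : ∀ᵐ ω ∂μ, Tendsto (fun n => Y n ω) atTop (nhds 0))
    (υ : ℝ) (hυ : ContinuousAt F υ) :
    ∀ᵐ ω ∂μ,
      Tendsto
        (fun n : ℕ => ((n : ℝ))⁻¹ *
          ∑ ℓ ∈ Finset.range n, if X ℓ ω + Y n ω ≤ υ then (1 : ℝ) else 0)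
        atTop (nhds (F υ)) := by
  have ε : ℕ → ℝ := fun k => (k+1:ℝ)⁻¹
  have hεpos : ∀ k : ℕ, (0:ℝ) < ((k:ℝ)+1)⁻¹ := fun k => by positivity
  have hεto : Tendsto (fun k : ℕ => ((k:ℝ)+1)⁻¹) atTop (nhds 0) :=
    tendsto_one_div_add_atTop_nhds_zero_nat.congr (fun k => by rw [one_div])
  have hminus := fun k : ℕ => ecdf_slln_aux μ X hXmeas hXindep hXident (υ - ((k:ℝ)+1)⁻¹)
  have hplus := fun k : ℕ => ecdf_slln_aux μ X hXmeas hXindep hXident (υ + ((k:ℝ)+1)⁻¹)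
  rw [← ae_all_iff] at hminus hplus
  filter_upwards [hminus, hplus, hY] with ω hm hp hYω
  -- rewrite limits in terms of F
  have hm' : ∀ k : ℕ, Tendsto
      (fun n : ℕ => ((n : ℝ))⁻¹ * ∑ ℓ ∈ Finset.range n,
        if X ℓ ω ≤ υ - ((k:ℝ)+1)⁻¹ then (1:ℝ) else 0) atTop (nhds (F (υ - ((k:ℝ)+1)⁻¹))) := by
    intro k; rw [hF]; exact hm k
  have hp' : ∀ k : ℕ, Tendsto
      (fun n : ℕ => ((n : ℝ))⁻¹ * ∑ ℓ ∈ Finset.range n,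
        if X ℓ ω ≤ υ + ((k:ℝ)+1)⁻¹ then (1:ℝ) else 0) atTop (nhds (F (υ + ((k:ℝ)+1)⁻¹))) := by
    intro k; rw [hF]; exact hp k
  set u : ℕ → ℝ := fun n => ((n : ℝ))⁻¹ *
      ∑ ℓ ∈ Finset.range n, if X ℓ ω + Y n ω ≤ υ then (1 : ℝ) else 0 with hu
  have hu0 : ∀ n, 0 ≤ u n := by
    intro n
    apply mul_nonneg (by positivity)
    apply Finset.sum_nonneg
    intro ℓ _; split <;> norm_num
  have hu1 : ∀ n, u n ≤ 1 := by
    intro n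
    rcases Nat.eq_zero_or_pos n with h | h
    · simp [hu, h]
    · have : (∑ ℓ ∈ Finset.range n, if X ℓ ω + Y n ω ≤ υ then (1:ℝ) else 0) ≤ n := by
        calc (∑ ℓ ∈ Finset.range n, if X ℓ ω + Y n ω ≤ υ then (1:ℝ) else 0)
            ≤ ∑ ℓ ∈ Finset.range n, (1:ℝ) := by
              apply Finset.sum_le_sum; intro ℓ _; split <;> norm_num
          _ = n := by simp
      rw [hu]
      calc ((n:ℝ))⁻¹ * ∑ ℓ ∈ Finset.range n, (if X ℓ ω + Y n ω ≤ υ then (1:ℝ) else 0)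
          ≤ ((n:ℝ))⁻¹ * n := by
            apply mul_le_mul_of_nonneg_left this (by positivity)
        _ = 1 := by
            field_simp
  have hbdd_above : IsBoundedUnder (· ≤ ·) atTop u := isBoundedUnder_of ⟨1, hu1⟩
  have hbdd_below : IsBoundedUnder (· ≥ ·) atTop u := isBoundedUnder_of ⟨0, hu0⟩
  -- limsup bound
  have hlimsup : ∀ k : ℕ, limsup u atTop ≤ F (υ + ((k:ℝ)+1)⁻¹) := by
    intro k
    have hev : ∀ᶠ n in atTop, u n ≤ ((n : ℝ))⁻¹ * ∑ ℓ ∈ Finset.range n,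
        if X ℓ ω ≤ υ + ((k:ℝ)+1)⁻¹ then (1:ℝ) else 0 := by
      have hYsmall : ∀ᶠ n in atTop, |Y n ω| < ((k:ℝ)+1)⁻¹ := by
        have hmem := hYω.eventually_mem (Metric.ball_mem_nhds (0:ℝ) (hεpos k))
        filter_upwards [hmem] with n hn
        simpa [Real.dist_eq] using hn
      filter_upwards [hYsmall] with n hn
      apply mul_le_mul_of_nonneg_left _ (by positivity)
      apply Finset.sum_le_sum
      intro ℓ _
      by_cases h1 : X ℓ ω + Y n ω ≤ υ
      · have h2 : X ℓ ω ≤ υ + ((k:ℝ)+1)⁻¹ := by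
          have := abs_lt.mp hn; linarith [this.1]
        simp [h1, h2]
      · simp only [h1, if_false]
        split <;> norm_num
    calc limsup u atTop ≤ limsup (fun n : ℕ => ((n : ℝ))⁻¹ * ∑ ℓ ∈ Finset.range n,
          if X ℓ ω ≤ υ + ((k:ℝ)+1)⁻¹ then (1:ℝ) else 0) atTop :=
          limsup_le_limsup hev (hbdd_below.isCoboundedUnder_le) ((hp' k).isBoundedUnder_le)
      _ = F (υ + ((k:ℝ)+1)⁻¹) := (hp' k).limsup_eq
  have hliminf : ∀ k : ℕ, F (υ - ((k:ℝ)+1)⁻¹) ≤ liminf u atTop := by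
    intro k
    have hev : ∀ᶠ n : ℕ in atTop, ((n : ℝ))⁻¹ * (∑ ℓ ∈ Finset.range n,
        if X ℓ ω ≤ υ - ((k:ℝ)+1)⁻¹ then (1:ℝ) else 0) ≤ u n := by
      have hYsmall : ∀ᶠ n in atTop, |Y n ω| < ((k:ℝ)+1)⁻¹ := by
        have hmem := hYω.eventually_mem (Metric.ball_mem_nhds (0:ℝ) (hεpos k))
        filter_upwards [hmem] with n hn
        simpa [Real.dist_eq] using hn
      filter_upwards [hYsmall] with n hn
      apply mul_le_mul_of_nonneg_left _ (by positivity)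
      apply Finset.sum_le_sum
      intro ℓ _
      by_cases h1 : X ℓ ω ≤ υ - ((k:ℝ)+1)⁻¹
      · have h2 : X ℓ ω + Y n ω ≤ υ := by
          have := abs_lt.mp hn; linarith [this.2]
        simp [h1, h2]
      · simp only [h1, if_false]
        split <;> norm_num
    calc F (υ - ((k:ℝ)+1)⁻¹) = liminf (fun n : ℕ => ((n : ℝ))⁻¹ * ∑ ℓ ∈ Finset.range n,
          if X ℓ ω ≤ υ - ((k:ℝ)+1)⁻¹ then (1:ℝ) else 0) atTop := ((hm' k).liminf_eq).symm
      _ ≤ liminf u atTop :=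
          liminf_le_liminf hev ((hm' k).isBoundedUnder_ge) (hbdd_above.isCoboundedUnder_ge)
  -- pass to the limit in k using continuity of F at υ
  have hFplus : Tendsto (fun k : ℕ => F (υ + ((k:ℝ)+1)⁻¹)) atTop (nhds (F υ)) := by
    apply hυ.tendsto.comp
    have : Tendsto (fun k : ℕ => υ + ((k:ℝ)+1)⁻¹) atTop (nhds (υ + 0)) :=
      tendsto_const_nhds.add hεto
    simpa using this
  have hFminus : Tendsto (fun k : ℕ => F (υ - ((k:ℝ)+1)⁻¹)) atTop (nhds (F υ)) := by
    apply hυ.tendsto.comp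
    have : Tendsto (fun k : ℕ => υ - ((k:ℝ)+1)⁻¹) atTop (nhds (υ - 0)) :=
      tendsto_const_nhds.sub hεto
    simpa using this
  have h1 : limsup u atTop ≤ F υ :=
    ge_of_tendsto hFplus (Eventually.of_forall hlimsup)
  have h2 : F υ ≤ liminf u atTop :=
    le_of_tendsto hFminus (Eventually.of_forall hliminf)
  exact tendsto_of_le_liminf_of_limsup_le h2 h1 hbdd_above hbdd_below
end

section
/- Let (X_n)_{n∈ℕ} be i.i.d. real random variables with common cumulative distribution function F_X, and let (E_n) be real random variables on the same probability space with E_n → 0 in probability as n → ∞. Then for every point of continuity υ of F_X, (1/n) Σ_{ℓ=1}^n 1{X_ℓ + E_n ≤ υ} → F_X(υ) in probability as n → ∞. -/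
open MeasureTheory ProbabilityTheory Filter

/-- Convergence in probability of a sequence of real random variables to a constant:
`P(|X_n - c| > ε) → 0` for every `ε > 0`. -/
def TendstoInProb {Ω : Type*} [MeasurableSpace Ω] (μ : Measure Ω)
    (X : ℕ → Ω → ℝ) (c : ℝ) : Prop :=
  ∀ ε > (0 : ℝ), Tendsto (fun n => μ {ω | ε < |X n ω - c|}) atTop (nhds 0)

/-- Law of large numbers for the empirical c.d.f. at a fixed point, in measure. -/
lemma emp_cdf_tendstoInMeasure {Ω : Type*} [MeasurableSpace Ω] (μ : Measure Ω)
    [IsProbabilityMeasure μ]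
    (X : ℕ → Ω → ℝ) (hXmeas : ∀ n, Measurable (X n))
    (hXindep : iIndepFun X μ)
    (hXident : ∀ n, μ.map (X n) = μ.map (X 0)) (t : ℝ) :
    TendstoInMeasure μ
      (fun (n : ℕ) ω => ((n : ℝ))⁻¹ * ∑ ℓ ∈ Finset.range n, if X ℓ ω ≤ t then (1 : ℝ) else 0)
      atTop (fun _ => (μ {ω | X 0 ω ≤ t}).toReal) := by
  classical
  have hms : MeasurableSet {ω | X 0 ω ≤ t} := measurableSet_le (hXmeas 0) measurable_const
  set f : ℝ → ℝ := fun x => if x ≤ t then (1 : ℝ) else 0 with hfdef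
  have hfm : Measurable f :=
    Measurable.ite measurableSet_Iic measurable_const measurable_const
  set Y : ℕ → Ω → ℝ := fun ℓ => f ∘ X ℓ with hYdef
  have hident : ∀ i, IdentDistrib (Y i) (Y 0) μ μ := fun i =>
    IdentDistrib.comp ⟨(hXmeas i).aemeasurable, (hXmeas 0).aemeasurable, hXident i⟩ hfm
  have hindep : Pairwise (Function.onFun (IndepFun · · μ) Y) := fun i j hij =>
    (hXindep.indepFun hij).comp hfm hfm
  have hY0 : Y 0 = ({ω | X 0 ω ≤ t}).indicator (fun _ => (1 : ℝ)) := by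
    funext ω
    simp [hYdef, hfdef, Set.indicator_apply, Function.comp]
  have hint : Integrable (Y 0) μ := by
    rw [hY0]
    exact (integrable_const 1).indicator hms
  have hlln := strong_law_ae_real Y hint hindep hident
  have hmean : μ[Y 0] = (μ {ω | X 0 ω ≤ t}).toReal := by
    rw [hY0, integral_indicator_const _ hms]
    simp [Measure.real]
  rw [hmean] at hlln
  have hae : ∀ᵐ ω ∂μ, Tendsto
      (fun n : ℕ => ((n : ℝ))⁻¹ * ∑ ℓ ∈ Finset.range n, if X ℓ ω ≤ t then (1 : ℝ) else 0)
      atTop (nhds ((μ {ω | X 0 ω ≤ t}).toReal)) := by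
    filter_upwards [hlln] with ω hω
    have : (fun n : ℕ => ((n : ℝ))⁻¹ *
        ∑ ℓ ∈ Finset.range n, if X ℓ ω ≤ t then (1 : ℝ) else 0) =
        fun n : ℕ => (∑ i ∈ Finset.range n, Y i ω) / n := by
      funext n
      rw [div_eq_inv_mul]
      rfl
    rw [this]
    exact hω
  refine tendstoInMeasure_of_tendsto_ae (fun n => ?_) hae
  refine (Measurable.const_mul ?_ _).aestronglyMeasurable
  exact Finset.measurable_sum _ fun ℓ _ =>
    Measurable.ite (measurableSet_le (hXmeas ℓ) measurable_const)
      measurable_const measurable_const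

/-- let `(X_n)` be i.i.d. real random variables with common c.d.f.
`F`, and let `E_n → 0` in probability. Then for every continuity point `υ` of `F`,
the perturbed empirical c.d.f. `(1/n) Σ_{ℓ<n} 1{X_ℓ + E_n ≤ υ}` converges to `F(υ)`
in probability. -/
theorem perturbed_ecdf_tendsto_inProb
    {Ω : Type*} [MeasurableSpace Ω] (μ : Measure Ω) [IsProbabilityMeasure μ]
    (X : ℕ → Ω → ℝ) (hXmeas : ∀ n, Measurable (X n))
    (hXindep : iIndepFun X μ)
    (hXident : ∀ n, μ.map (X n) = μ.map (X 0))
    (F : ℝ → ℝ) (hF : ∀ t, F t = (μ {ω | X 0 ω ≤ t}).toReal)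
    (E : ℕ → Ω → ℝ) (hE : TendstoInProb μ E 0)
    (υ : ℝ) (hυ : ContinuousAt F υ) :
    TendstoInProb μ
      (fun n ω => ((n : ℝ))⁻¹ *
        ∑ ℓ ∈ Finset.range n, if X ℓ ω + E n ω ≤ υ then (1 : ℝ) else 0)
      (F υ) := by
  classical
  intro ε hε
  -- choose δ so that F varies by less than ε/3 on [υ - δ, υ + δ]
  obtain ⟨δ', hδ'pos, hδ'⟩ := Metric.continuousAt_iff.mp hυ (ε / 3) (by linarith)
  set δ : ℝ := δ' / 2 with hδdef
  have hδpos : 0 < δ := by positivity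
  have hd1 : dist (υ + δ) υ < δ' := by
    rw [Real.dist_eq, show υ + δ - υ = δ by ring, abs_of_pos hδpos, hδdef]
    linarith
  have hd2 : dist (υ - δ) υ < δ' := by
    rw [Real.dist_eq, show υ - δ - υ = -δ by ring, abs_neg, abs_of_pos hδpos, hδdef]
    linarith
  have hup : |F (υ + δ) - F υ| < ε / 3 := by
    have h := hδ' hd1
    rwa [Real.dist_eq] at h
  have hdown : |F (υ - δ) - F υ| < ε / 3 := by
    have h := hδ' hd2
    rwa [Real.dist_eq] at h
  -- empirical c.d.f.s at υ ± δ
  set U : ℕ → Ω → ℝ := fun n ω =>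
    ((n : ℝ))⁻¹ * ∑ ℓ ∈ Finset.range n, if X ℓ ω ≤ υ + δ then (1 : ℝ) else 0 with hUdef
  set L : ℕ → Ω → ℝ := fun n ω =>
    ((n : ℝ))⁻¹ * ∑ ℓ ∈ Finset.range n, if X ℓ ω ≤ υ - δ then (1 : ℝ) else 0 with hLdef
  have hU := tendstoInMeasure_iff_dist.mp (emp_cdf_tendstoInMeasure μ X hXmeas hXindep hXident (υ + δ)) (ε / 3) (by linarith)
  have hL := tendstoInMeasure_iff_dist.mp (emp_cdf_tendstoInMeasure μ X hXmeas hXindep hXident (υ - δ)) (ε / 3) (by linarith)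
  rw [← hF (υ + δ)] at hU
  rw [← hF (υ - δ)] at hL
  have hEδ := hE δ hδpos
  set S : ℕ → Ω → ℝ := fun n ω =>
    ((n : ℝ))⁻¹ * ∑ ℓ ∈ Finset.range n, if X ℓ ω + E n ω ≤ υ then (1 : ℝ) else 0 with hSdef
  -- key inclusion
  have key : ∀ n, {ω | ε < |S n ω - F υ|} ⊆
      {ω | δ < |E n ω - 0|} ∪
      ({ω | ε / 3 ≤ dist (U n ω) (F (υ + δ))} ∪
       {ω | ε / 3 ≤ dist (L n ω) (F (υ - δ))}) := by
    intro n ω hω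
    simp only [Set.mem_setOf_eq] at hω
    by_contra hc
    simp only [Set.mem_union, Set.mem_setOf_eq, not_or, not_lt, not_le] at hc
    obtain ⟨hEb, hUb, hLb⟩ := hc
    rw [sub_zero] at hEb
    rw [Real.dist_eq] at hUb hLb
    have hEabs := abs_le.mp hEb
    -- pointwise sandwich: L n ω ≤ S n ω ≤ U n ω
    have hSU : S n ω ≤ U n ω := by
      refine mul_le_mul_of_nonneg_left (Finset.sum_le_sum fun ℓ _ => ?_)
        (by positivity)
      by_cases h : X ℓ ω + E n ω ≤ υ
      · have h2 : X ℓ ω ≤ υ + δ := by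
          have := hEabs.1
          linarith
        simp [h, h2]
      · simp only [h, if_false]
        by_cases h2 : X ℓ ω ≤ υ + δ <;> simp [h2]
    have hLS : L n ω ≤ S n ω := by
      refine mul_le_mul_of_nonneg_left (Finset.sum_le_sum fun ℓ _ => ?_)
        (by positivity)
      by_cases h : X ℓ ω ≤ υ - δ
      · have h2 : X ℓ ω + E n ω ≤ υ := by
          have := hEabs.2
          linarith
        simp [h, h2]
      · simp only [h, if_false]
        by_cases h2 : X ℓ ω + E n ω ≤ υ <;> simp [h2]
    have h1 := abs_lt.mp hup
    have h2 := abs_lt.mp hdown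
    have h3 := abs_lt.mp hUb
    have h4 := abs_lt.mp hLb
    -- S - Fυ ≤ U - Fυ < 2ε/3 and Fυ - S ≤ Fυ - L < 2ε/3, contradiction with ε < |S - Fυ|
    rcases le_or_gt (S n ω - F υ) 0 with h5 | h5
    · rw [abs_of_nonpos h5] at hω
      linarith
    · rw [abs_of_pos h5] at hω
      linarith
  -- subadditivity and squeeze
  have hb : ∀ n, μ {ω | ε < |S n ω - F υ|} ≤
      μ {ω | δ < |E n ω - 0|} +
      (μ {ω | ε / 3 ≤ dist (U n ω) (F (υ + δ))} +
       μ {ω | ε / 3 ≤ dist (L n ω) (F (υ - δ))}) := fun n =>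
    le_trans (measure_mono (key n))
      (le_trans (measure_union_le _ _) (add_le_add le_rfl (measure_union_le _ _)))
  have hsum : Tendsto (fun n =>
      μ {ω | δ < |E n ω - 0|} +
      (μ {ω | ε / 3 ≤ dist (U n ω) (F (υ + δ))} +
       μ {ω | ε / 3 ≤ dist (L n ω) (F (υ - δ))})) atTop (nhds 0) := by
    have := hEδ.add (hU.add hL)
    simpa only [add_zero] using this
  exact tendsto_of_tendsto_of_tendsto_of_le_of_le tendsto_const_nhds hsum
    (fun n => zero_le) hb
end

section
/- Let p ∈ ℕ, let P be an invertible p×p real matrix, let A be a p×p diagonal matrix with strictly positive diagonal entries, and let W be a p×p real symmetric positive semidefinite matrix. Then for every ℓ = 1,…,p: λ_ℓ(A²) · λ_1(W) · σ_1(P)² ≤ λ_ℓ(P A W A Pᵀ) ≤ λ_ℓ(A²) · λ_p(W) · σ_p(P)². -/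
open Matrix Polynomial

/-- The eigenvalues of a real symmetric (Hermitian) matrix, listed in nondecreasing
order. (Junk value `0` if the matrix is not Hermitian.) -/
noncomputable def sortedEigs {n : ℕ} (A : Matrix (Fin n) (Fin n) ℝ) : Fin n → ℝ :=
  if hA : A.IsHermitian then hA.eigenvalues ∘ Tuple.sort hA.eigenvalues else 0

/-- `eigLE A k` is the `(k+1)`-th smallest eigenvalue `λ_{k+1}(A)` of the real
symmetric matrix `A` (with junk value `0` when `k ≥ n`). -/
noncomputable def eigLE {n : ℕ} (A : Matrix (Fin n) (Fin n) ℝ) (k : ℕ) : ℝ :=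
  if h : k < n then sortedEigs A ⟨k, h⟩ else 0

/-- `svLE P k` is the `(k+1)`-th smallest singular value `σ_{k+1}(P)` of the real
square matrix `P`, i.e. the square root of the `(k+1)`-th smallest eigenvalue of
`PᵀP`. -/
noncomputable def svLE {n : ℕ} (P : Matrix (Fin n) (Fin n) ℝ) (k : ℕ) : ℝ :=
  Real.sqrt (eigLE (Pᵀ * P) k)

/-! ### Auxiliary lemmas on sorting tuples -/

lemma monotone_eq_of_multiset_eq {n : ℕ} {f g : Fin n → ℝ}
    (hf : Monotone f) (hg : Monotone g)
    (h : Multiset.map f Finset.univ.val = Multiset.map g Finset.univ.val) : f = g := by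
  have huniv : (Finset.univ : Finset (Fin n)).val = ↑(List.finRange n) := rfl
  have hperm : (List.ofFn f).Perm (List.ofFn g) := by
    rw [← Multiset.coe_eq_coe]
    simpa [List.ofFn_eq_map, huniv] using h
  have hsf : (List.ofFn f).Pairwise (· ≤ ·) := by
    rw [← List.sortedLE_iff_pairwise, List.sortedLE_ofFn_iff]; exact hf
  have hsg : (List.ofFn g).Pairwise (· ≤ ·) := by
    rw [← List.sortedLE_iff_pairwise, List.sortedLE_ofFn_iff]; exact hg
  exact List.ofFn_injective (List.Perm.eq_of_pairwise' hsf hsg hperm)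

lemma multiset_map_comp_perm {n : ℕ} (f : Fin n → ℝ) (σ : Equiv.Perm (Fin n)) :
    Multiset.map (f ∘ σ) Finset.univ.val = Multiset.map f Finset.univ.val := by
  rw [← Multiset.map_map]
  congr 1
  calc Multiset.map (⇑σ) Finset.univ.val = (Finset.univ.map σ.toEmbedding).val := by
        simp [Finset.map]
    _ = Finset.univ.val := by rw [Finset.map_univ_equiv]

lemma sort_comp_eq_of_multiset_eq {n : ℕ} {f g : Fin n → ℝ}
    (h : Multiset.map f Finset.univ.val = Multiset.map g Finset.univ.val) :
    f ∘ Tuple.sort f = g ∘ Tuple.sort g :=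
  monotone_eq_of_multiset_eq (Tuple.monotone_sort f) (Tuple.monotone_sort g)
    (by rw [multiset_map_comp_perm, multiset_map_comp_perm]; exact h)

/-! ### Characteristic polynomial lemmas -/

lemma charpoly_conj {p : ℕ} (U V M : Matrix (Fin p) (Fin p) ℝ) (hUV : U * V = 1) :
    (U * M * V).charpoly = M.charpoly := by
  have key : charmatrix (U * M * V)
      = (C : ℝ →+* ℝ[X]).mapMatrix U * charmatrix M * (C : ℝ →+* ℝ[X]).mapMatrix V := by
    have hcomm : Commute (Matrix.scalar (Fin p) (X : ℝ[X])) ((C : ℝ →+* ℝ[X]).mapMatrix U) :=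
      Matrix.scalar_commute _ (fun r' => Commute.all _ _) _
    unfold charmatrix
    rw [mul_sub, sub_mul, ← hcomm.eq, mul_assoc ((Matrix.scalar (Fin p)) X),
      ← _root_.map_mul, hUV, _root_.map_one, mul_one]
    congr 1
    rw [← _root_.map_mul, ← _root_.map_mul]
  have hdet : ((C : ℝ →+* ℝ[X]).mapMatrix U).det * ((C : ℝ →+* ℝ[X]).mapMatrix V).det = 1 := by
    rw [← det_mul, ← _root_.map_mul, hUV, _root_.map_one, det_one]
  rw [Matrix.charpoly, Matrix.charpoly, key, det_mul, det_mul]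
  calc ((C : ℝ →+* ℝ[X]).mapMatrix U).det * (charmatrix M).det
        * ((C : ℝ →+* ℝ[X]).mapMatrix V).det
      = (charmatrix M).det * (((C : ℝ →+* ℝ[X]).mapMatrix U).det
        * ((C : ℝ →+* ℝ[X]).mapMatrix V).det) := by ring
    _ = (charmatrix M).det := by rw [hdet, mul_one]

lemma charpoly_diagonal {p : ℕ} (v : Fin p → ℝ) :
    (Matrix.diagonal v).charpoly = ∏ i, (X - C (v i)) := by
  have : charmatrix (Matrix.diagonal v) = Matrix.diagonal (fun i => X - C (v i)) := by
    ext i j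
    by_cases h : i = j
    · subst h; simp [charmatrix_apply_eq]
    · simp [charmatrix_apply_ne _ _ _ h, Matrix.diagonal_apply_ne _ h]
  rw [Matrix.charpoly, this, det_diagonal]

lemma roots_prod_X_sub_C' {p : ℕ} (f : Fin p → ℝ) :
    (∏ i, (X - C (f i))).roots = Multiset.map f Finset.univ.val := by
  rw [Polynomial.roots_prod _ _ (by
    exact (monic_prod_of_monic _ _ fun i _ => monic_X_sub_C _).ne_zero)]
  simp [roots_X_sub_C]

/-! ### Spectral lemmas -/

section Spectral
variable {p : ℕ}

lemma spectral_real {M : Matrix (Fin p) (Fin p) ℝ} (hM : M.IsHermitian) :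
    M = (hM.eigenvectorUnitary : Matrix (Fin p) (Fin p) ℝ) * Matrix.diagonal hM.eigenvalues
        * star (hM.eigenvectorUnitary : Matrix (Fin p) (Fin p) ℝ) := by
  have := hM.spectral_theorem
  rwa [RCLike.ofReal_real_eq_id, Function.id_comp] at this

lemma charpoly_isHermitian {M : Matrix (Fin p) (Fin p) ℝ} (hM : M.IsHermitian) :
    M.charpoly = ∏ i, (X - C (hM.eigenvalues i)) := by
  conv_lhs => rw [spectral_real hM]
  rw [charpoly_conj _ _ _ (mem_unitaryGroup_iff.mp hM.eigenvectorUnitary.2),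
    charpoly_diagonal]

lemma eigs_multiset {M : Matrix (Fin p) (Fin p) ℝ} (hM : M.IsHermitian) :
    Multiset.map hM.eigenvalues Finset.univ.val = M.charpoly.roots := by
  rw [charpoly_isHermitian hM, roots_prod_X_sub_C']

lemma sortedEigs_eq_of_charpoly {M N : Matrix (Fin p) (Fin p) ℝ}
    (hM : M.IsHermitian) (hN : N.IsHermitian) (h : M.charpoly = N.charpoly) :
    sortedEigs M = sortedEigs N := by
  unfold sortedEigs
  rw [dif_pos hM, dif_pos hN]
  exact sort_comp_eq_of_multiset_eq (by rw [eigs_multiset hM, eigs_multiset hN, h])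

lemma sortedEigs_of_hermitian {M : Matrix (Fin p) (Fin p) ℝ} (hM : M.IsHermitian) :
    sortedEigs M = hM.eigenvalues ∘ Tuple.sort hM.eigenvalues := by
  unfold sortedEigs; rw [dif_pos hM]

lemma eig_le_sorted_last {M : Matrix (Fin p) (Fin p) ℝ} (hM : M.IsHermitian)
    (hp : 0 < p) (i : Fin p) :
    hM.eigenvalues i ≤ sortedEigs M ⟨p - 1, by omega⟩ := by
  rw [sortedEigs_of_hermitian hM]
  set σ := Tuple.sort hM.eigenvalues
  have : hM.eigenvalues i = (hM.eigenvalues ∘ σ) (σ.symm i) := by simp [σ]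
  rw [this]
  exact Tuple.monotone_sort hM.eigenvalues (by
    exact Fin.le_def.mpr (by
      simpa using Nat.le_of_lt_succ (by
        simpa [Nat.sub_add_cancel hp] using (σ.symm i).isLt)))

lemma sorted_first_le_eig {M : Matrix (Fin p) (Fin p) ℝ} (hM : M.IsHermitian)
    (hp : 0 < p) (i : Fin p) :
    sortedEigs M ⟨0, hp⟩ ≤ hM.eigenvalues i := by
  rw [sortedEigs_of_hermitian hM]
  set σ := Tuple.sort hM.eigenvalues
  have : hM.eigenvalues i = (hM.eigenvalues ∘ σ) (σ.symm i) := by simp [σ]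
  rw [this]
  exact Tuple.monotone_sort hM.eigenvalues (Fin.le_def.mpr (by simp))

lemma sortedEigs_nonneg {M : Matrix (Fin p) (Fin p) ℝ} (hM : M.PosSemidef) (i : Fin p) :
    0 ≤ sortedEigs M i := by
  rw [sortedEigs_of_hermitian hM.1]
  exact hM.eigenvalues_nonneg _

lemma sortedEigs_smul {M : Matrix (Fin p) (Fin p) ℝ} (hM : M.IsHermitian)
    {c : ℝ} (hc : 0 ≤ c) (i : Fin p) :
    sortedEigs (c • M) i = c * sortedEigs M i := by
  have hcM : (c • M).IsHermitian := by
    rw [Matrix.IsHermitian, conjTranspose_smul, star_trivial, hM.eq]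
  have hch : (c • M).charpoly = ∏ j, (X - C (c * hM.eigenvalues j)) := by
    conv_lhs => rw [spectral_real hM]
    rw [show c • ((hM.eigenvectorUnitary : Matrix (Fin p) (Fin p) ℝ)
          * Matrix.diagonal hM.eigenvalues
          * star (hM.eigenvectorUnitary : Matrix (Fin p) (Fin p) ℝ))
        = (hM.eigenvectorUnitary : Matrix (Fin p) (Fin p) ℝ)
          * Matrix.diagonal (fun j => c * hM.eigenvalues j)
          * star (hM.eigenvectorUnitary : Matrix (Fin p) (Fin p) ℝ) by
      have hdg : Matrix.diagonal (fun j => c * hM.eigenvalues j)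
          = c • Matrix.diagonal hM.eigenvalues := by
        rw [← Matrix.diagonal_smul]; rfl
      rw [hdg, Matrix.mul_smul, Matrix.smul_mul]]
    rw [charpoly_conj _ _ _ (mem_unitaryGroup_iff.mp hM.eigenvectorUnitary.2),
      charpoly_diagonal]
  have hmult : Multiset.map hcM.eigenvalues Finset.univ.val
      = Multiset.map (fun j => c * hM.eigenvalues j) Finset.univ.val := by
    have := eigs_multiset hcM
    rw [hch, roots_prod_X_sub_C'] at this
    exact this
  have : sortedEigs (c • M) = fun i => c * (hM.eigenvalues ∘ Tuple.sort hM.eigenvalues) i := by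
    rw [sortedEigs_of_hermitian hcM]
    apply monotone_eq_of_multiset_eq (Tuple.monotone_sort _)
      (fun a b hab => mul_le_mul_of_nonneg_left (Tuple.monotone_sort _ hab) hc)
    rw [multiset_map_comp_perm, hmult]
    calc Multiset.map (fun j => c * hM.eigenvalues j) Finset.univ.val
        = Multiset.map (fun x => c * x) (Multiset.map hM.eigenvalues Finset.univ.val) :=
          (Multiset.map_map _ _ _).symm
      _ = Multiset.map (fun x => c * x)
            (Multiset.map (hM.eigenvalues ∘ Tuple.sort hM.eigenvalues) Finset.univ.val) := by
          rw [multiset_map_comp_perm]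
      _ = Multiset.map (fun i => c * (hM.eigenvalues ∘ Tuple.sort hM.eigenvalues) i)
            Finset.univ.val := Multiset.map_map _ _ _
  rw [this, sortedEigs_of_hermitian hM]

end Spectral

/-! ### Rayleigh quotients and Weyl monotonicity -/

lemma star_eq_t {n : ℕ} (U : Matrix (Fin n) (Fin n) ℝ) : star U = Uᵀ := by
  rw [Matrix.star_eq_conjTranspose, Matrix.conjTranspose_eq_transpose_of_trivial]

lemma rayleigh {n : ℕ} {M : Matrix (Fin n) (Fin n) ℝ} (hM : M.IsHermitian) (x : Fin n → ℝ) :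
    x ⬝ᵥ (M *ᵥ x) = ∑ i, hM.eigenvalues i *
      ((star (hM.eigenvectorUnitary : Matrix (Fin n) (Fin n) ℝ) *ᵥ x) i)^2 := by
  set U := (hM.eigenvectorUnitary : Matrix (Fin n) (Fin n) ℝ)
  set y := star U *ᵥ x with hy
  have hvm : x ᵥ* U = y := by rw [hy, star_eq_t, mulVec_transpose]
  conv_lhs => rw [spectral_real hM]
  rw [← mulVec_mulVec, ← mulVec_mulVec, dotProduct_mulVec, hvm, dotProduct]
  refine Finset.sum_congr rfl fun i _ => ?_
  rw [mulVec_diagonal]; ring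

lemma sum_sq_mulVec_star {n : ℕ} (U : Matrix (Fin n) (Fin n) ℝ)
    (hU : U ∈ Matrix.unitaryGroup (Fin n) ℝ) (x : Fin n → ℝ) :
    ∑ i, ((star U *ᵥ x) i)^2 = ∑ i, (x i)^2 := by
  have h1 : ∀ v : Fin n → ℝ, ∑ i, (v i)^2 = v ⬝ᵥ v := by
    intro v; simp [dotProduct, sq]
  rw [h1, h1]
  set y := star U *ᵥ x with hy
  have : y ᵥ* star U = x := by
    rw [← mulVec_transpose, star_eq_t, transpose_transpose, hy, mulVec_mulVec,
      mem_unitaryGroup_iff.mp hU, one_mulVec]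
  calc y ⬝ᵥ y = y ⬝ᵥ (star U *ᵥ x) := rfl
    _ = (y ᵥ* star U) ⬝ᵥ x := dotProduct_mulVec _ _ _
    _ = x ⬝ᵥ x := by rw [this]

lemma exists_ne_zero_kernel {n : ℕ} (Sc Tc : Finset (Fin n)) (hcard : Sc.card + Tc.card < n)
    (f g : Matrix (Fin n) (Fin n) ℝ) :
    ∃ x : Fin n → ℝ, x ≠ 0 ∧ (∀ i ∈ Sc, (f *ᵥ x) i = 0) ∧ (∀ i ∈ Tc, (g *ᵥ x) i = 0) := by
  classical
  set L : (Fin n → ℝ) →ₗ[ℝ] (↥Sc → ℝ) × (↥Tc → ℝ) :=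
    LinearMap.prod
      (LinearMap.pi fun i : ↥Sc => (LinearMap.proj i.val).comp f.mulVecLin)
      (LinearMap.pi fun i : ↥Tc => (LinearMap.proj i.val).comp g.mulVecLin) with hL
  have hcod : Module.finrank ℝ ((↥Sc → ℝ) × (↥Tc → ℝ)) = Sc.card + Tc.card := by
    rw [Module.finrank_prod, Module.finrank_pi, Module.finrank_pi, Fintype.card_coe,
      Fintype.card_coe]
  have hdom : Module.finrank ℝ (Fin n → ℝ) = n := by
    rw [Module.finrank_pi, Fintype.card_fin]
  have hrn := LinearMap.finrank_range_add_finrank_ker L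
  have hrange : Module.finrank ℝ (LinearMap.range L) ≤ Sc.card + Tc.card := by
    rw [← hcod]; exact (LinearMap.range L).finrank_le
  have hker : 0 < Module.finrank ℝ (LinearMap.ker L) := by
    rw [hdom] at hrn; omega
  have hne : LinearMap.ker L ≠ ⊥ := by
    intro h
    rw [h, finrank_bot] at hker
    exact lt_irrefl 0 hker
  obtain ⟨x, hxker, hx0⟩ := Submodule.exists_mem_ne_zero_of_ne_bot hne
  refine ⟨x, hx0, ?_, ?_⟩
  · intro i hi
    have := congr_fun (congr_arg Prod.fst (LinearMap.mem_ker.mp hxker)) ⟨i, hi⟩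
    simpa [hL] using this
  · intro i hi
    have := congr_fun (congr_arg Prod.snd (LinearMap.mem_ker.mp hxker)) ⟨i, hi⟩
    simpa [hL] using this

lemma weyl_mono {n : ℕ} {B C : Matrix (Fin n) (Fin n) ℝ} (hB : B.IsHermitian)
    (hC : C.IsHermitian) (hBC : (B - C).PosSemidef) (ℓ : Fin n) :
    sortedEigs C ℓ ≤ sortedEigs B ℓ := by
  classical
  set eB := hB.eigenvalues with heB
  set eC := hC.eigenvalues with heC
  set σB := Tuple.sort eB with hσB
  set σC := Tuple.sort eC with hσC
  set UB := (hB.eigenvectorUnitary : Matrix (Fin n) (Fin n) ℝ) with hUB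
  set UC := (hC.eigenvectorUnitary : Matrix (Fin n) (Fin n) ℝ) with hUC
  set S : Finset (Fin n) := (Finset.Ici ℓ).image σC with hS
  set T : Finset (Fin n) := (Finset.Iic ℓ).image σB with hT
  have hScard : S.card = n - ℓ.val := by
    rw [hS, Finset.card_image_of_injective _ σC.injective, Fin.card_Ici]
  have hTcard : T.card = ℓ.val + 1 := by
    rw [hT, Finset.card_image_of_injective _ σB.injective, Fin.card_Iic]
  have hcard : Sᶜ.card + Tᶜ.card < n := by
    rw [Finset.card_compl, Finset.card_compl, hScard, hTcard, Fintype.card_fin]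
    have := ℓ.isLt; omega
  obtain ⟨x, hx0, hxS, hxT⟩ := exists_ne_zero_kernel Sᶜ Tᶜ hcard (star UC) (star UB)
  set yC := star UC *ᵥ x with hyC
  set yB := star UB *ᵥ x with hyB
  have hsum : 0 < ∑ i, (x i)^2 := by
    obtain ⟨j, hj⟩ := Function.ne_iff.mp hx0
    exact Finset.sum_pos' (fun i _ => sq_nonneg _)
      ⟨j, Finset.mem_univ j, lt_of_le_of_ne (sq_nonneg _) (Ne.symm (pow_ne_zero 2 hj))⟩
  have hClow : sortedEigs C ℓ * ∑ i, (x i)^2 ≤ x ⬝ᵥ (C *ᵥ x) := by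
    rw [rayleigh hC x, ← sum_sq_mulVec_star UC hC.eigenvectorUnitary.2 x, Finset.mul_sum]
    refine Finset.sum_le_sum fun i _ => ?_
    by_cases hyi : yC i = 0
    · simp [← hyC, hyi, show (star (hC.eigenvectorUnitary : Matrix (Fin n) (Fin n) ℝ) *ᵥ x) i = 0 from hyi]
    · have hiS : i ∈ S := by
        by_contra hiS
        exact hyi (by rw [hyC]; exact hxS i (Finset.mem_compl.mpr hiS))
      obtain ⟨j, hj, rfl⟩ := Finset.mem_image.mp hiS
      have : sortedEigs C ℓ ≤ eC (σC j) := by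
        rw [sortedEigs_of_hermitian hC, ← heC, ← hσC]
        exact Tuple.monotone_sort eC (Finset.mem_Ici.mp hj)
      exact mul_le_mul_of_nonneg_right this (sq_nonneg _)
  have hBup : x ⬝ᵥ (B *ᵥ x) ≤ sortedEigs B ℓ * ∑ i, (x i)^2 := by
    rw [rayleigh hB x, ← sum_sq_mulVec_star UB hB.eigenvectorUnitary.2 x, Finset.mul_sum]
    refine Finset.sum_le_sum fun i _ => ?_
    by_cases hyi : yB i = 0
    · simp [← hyB, hyi, show (star (hB.eigenvectorUnitary : Matrix (Fin n) (Fin n) ℝ) *ᵥ x) i = 0 from hyi]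
    · have hiT : i ∈ T := by
        by_contra hiT
        exact hyi (by rw [hyB]; exact hxT i (Finset.mem_compl.mpr hiT))
      obtain ⟨j, hj, rfl⟩ := Finset.mem_image.mp hiT
      have : eB (σB j) ≤ sortedEigs B ℓ := by
        rw [sortedEigs_of_hermitian hB, ← heB, ← hσB]
        exact Tuple.monotone_sort eB (Finset.mem_Iic.mp hj)
      exact mul_le_mul_of_nonneg_right this (sq_nonneg _)
  have hmid : x ⬝ᵥ (C *ᵥ x) ≤ x ⬝ᵥ (B *ᵥ x) := by
    have h := hBC.dotProduct_mulVec_nonneg x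
    rw [show star x = x from by simp, sub_mulVec, dotProduct_sub] at h
    linarith
  exact le_of_mul_le_mul_right (by linarith) hsum

/-! ### Loewner order facts -/

section Loewner
variable {p : ℕ}

lemma conj_unitary_diag_posSemidef {W : Matrix (Fin p) (Fin p) ℝ} (hW : W.IsHermitian)
    (v : Fin p → ℝ) (hv : ∀ i, 0 ≤ v i) :
    ((hW.eigenvectorUnitary : Matrix (Fin p) (Fin p) ℝ) * Matrix.diagonal v
      * star (hW.eigenvectorUnitary : Matrix (Fin p) (Fin p) ℝ)).PosSemidef :=
  (Matrix.PosSemidef.diagonal hv).mul_mul_conjTranspose_same _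

lemma smul_one_sub_posSemidef {W : Matrix (Fin p) (Fin p) ℝ} (hW : W.IsHermitian)
    {c : ℝ} (hc : ∀ i, hW.eigenvalues i ≤ c) :
    (c • (1 : Matrix (Fin p) (Fin p) ℝ) - W).PosSemidef := by
  classical
  set U := (hW.eigenvectorUnitary : Matrix (Fin p) (Fin p) ℝ) with hU
  have hUU : U * star U = 1 := mem_unitaryGroup_iff.mp hW.eigenvectorUnitary.2
  have key : c • (1 : Matrix (Fin p) (Fin p) ℝ) - W
      = U * Matrix.diagonal (fun i => c - hW.eigenvalues i) * star U := by
    have h1 : Matrix.diagonal (fun i : Fin p => c - hW.eigenvalues i)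
        = Matrix.diagonal (fun _ : Fin p => c) - Matrix.diagonal hW.eigenvalues := by
      rw [Matrix.diagonal_sub]
    rw [h1, Matrix.mul_sub, Matrix.sub_mul, ← Matrix.smul_one_eq_diagonal,
      Matrix.mul_smul, Matrix.smul_mul, Matrix.mul_one, hUU, ← spectral_real hW]
  rw [key]
  exact conj_unitary_diag_posSemidef hW _ (fun i => sub_nonneg.mpr (hc i))

lemma sub_smul_one_posSemidef {W : Matrix (Fin p) (Fin p) ℝ} (hW : W.IsHermitian)
    {c : ℝ} (hc : ∀ i, c ≤ hW.eigenvalues i) :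
    (W - c • (1 : Matrix (Fin p) (Fin p) ℝ)).PosSemidef := by
  classical
  set U := (hW.eigenvectorUnitary : Matrix (Fin p) (Fin p) ℝ) with hU
  have hUU : U * star U = 1 := mem_unitaryGroup_iff.mp hW.eigenvectorUnitary.2
  have key : W - c • (1 : Matrix (Fin p) (Fin p) ℝ)
      = U * Matrix.diagonal (fun i => hW.eigenvalues i - c) * star U := by
    have h1 : Matrix.diagonal (fun i : Fin p => hW.eigenvalues i - c)
        = Matrix.diagonal hW.eigenvalues - Matrix.diagonal (fun _ : Fin p => c) := by
      rw [Matrix.diagonal_sub]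
    rw [h1, Matrix.mul_sub, Matrix.sub_mul, ← Matrix.smul_one_eq_diagonal,
      Matrix.mul_smul, Matrix.smul_mul, Matrix.mul_one, hUU, ← spectral_real hW]
  rw [key]
  exact conj_unitary_diag_posSemidef hW _ (fun i => sub_nonneg.mpr (hc i))

end Loewner
/-- for an invertible `P`, a diagonal `A` with strictly positive
diagonal entries, and a symmetric positive semidefinite `W` (all real `p×p`
matrices), for every `ℓ = 1,…,p`:
`λ_ℓ(A²)·λ_1(W)·σ_1(P)² ≤ λ_ℓ(P A W A Pᵀ) ≤ λ_ℓ(A²)·λ_p(W)·σ_p(P)²`. -/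
theorem eigenvalue_bounds_conjugated_diagonal
    (p : ℕ) (P : Matrix (Fin p) (Fin p) ℝ) (hP : IsUnit P.det)
    (d : Fin p → ℝ) (hd : ∀ i, 0 < d i)
    (W : Matrix (Fin p) (Fin p) ℝ) (hW : W.PosSemidef) :
    ∀ ℓ : Fin p,
      sortedEigs (Matrix.diagonal d * Matrix.diagonal d) ℓ * eigLE W 0 *
          (svLE P 0) ^ 2 ≤
        sortedEigs (P * Matrix.diagonal d * W * Matrix.diagonal d * Pᵀ) ℓ ∧
      sortedEigs (P * Matrix.diagonal d * W * Matrix.diagonal d * Pᵀ) ℓ ≤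
        sortedEigs (Matrix.diagonal d * Matrix.diagonal d) ℓ * eigLE W (p - 1) *
          (svLE P (p - 1)) ^ 2 := by
  intro ℓ
  classical
  have hp : 0 < p := ℓ.pos
  set A := Matrix.diagonal d with hA
  have hAH : A.IsHermitian := Matrix.isHermitian_diagonal d
  have hPt : Pᵀ = Pᴴ := (Matrix.conjTranspose_eq_transpose_of_trivial P).symm
  set N := P * A with hN
  have hNH : Nᴴ = A * Pᴴ := by rw [hN, conjTranspose_mul, hAH.eq]
  have hMN : P * A * W * A * Pᵀ = N * W * Nᴴ := by
    rw [hPt, hNH, hN]; simp [Matrix.mul_assoc]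
  have hPtP : (Pᵀ * P).PosSemidef := by
    rw [hPt]; exact posSemidef_conjTranspose_mul_self P
  have hAA : (A * A).PosSemidef := by
    have := posSemidef_self_mul_conjTranspose A
    rwa [hAH.eq] at this
  have hNNH : (N * Nᴴ).PosSemidef := posSemidef_self_mul_conjTranspose N
  have hNHN : (Nᴴ * N).PosSemidef := posSemidef_conjTranspose_mul_self N
  have hNWN : (N * W * Nᴴ).PosSemidef := hW.mul_mul_conjTranspose_same N
  have hdA : IsUnit A.det := by
    rw [hA, det_diagonal]
    exact isUnit_iff_ne_zero.mpr (ne_of_gt (Finset.prod_pos fun i _ => hd i))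
  have hNdet : IsUnit N.det := by rw [hN, det_mul]; exact hP.mul hdA
  have hinv : N⁻¹ * N = 1 := nonsing_inv_mul N hNdet
  have hflip : sortedEigs (N * Nᴴ) = sortedEigs (Nᴴ * N) := by
    apply sortedEigs_eq_of_charpoly hNNH.1 hNHN.1
    have h1 : Nᴴ * N = N⁻¹ * (N * Nᴴ) * N := by
      rw [show N⁻¹ * (N * Nᴴ) * N = N⁻¹ * N * (Nᴴ * N) by simp [Matrix.mul_assoc],
        hinv, one_mul]
    rw [h1, charpoly_conj N⁻¹ N (N * Nᴴ) hinv]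
  have hNHNe : Nᴴ * N = A * (Pᵀ * P) * A := by
    rw [hNH, hN, hPt]; simp [Matrix.mul_assoc]
  have hpm : p - 1 < p := by omega
  have hwmax : eigLE W (p-1) = sortedEigs W ⟨p-1, hpm⟩ := by
    unfold eigLE; exact dif_pos hpm
  have hwmin : eigLE W 0 = sortedEigs W ⟨0, hp⟩ := by
    unfold eigLE; exact dif_pos hp
  have hsmax : eigLE (Pᵀ*P) (p-1) = sortedEigs (Pᵀ*P) ⟨p-1, hpm⟩ := by
    unfold eigLE; exact dif_pos hpm
  have hsmin : eigLE (Pᵀ*P) 0 = sortedEigs (Pᵀ*P) ⟨0, hp⟩ := by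
    unfold eigLE; exact dif_pos hp
  have hwmax0 : 0 ≤ eigLE W (p-1) := by rw [hwmax]; exact sortedEigs_nonneg hW _
  have hwmin0 : 0 ≤ eigLE W 0 := by rw [hwmin]; exact sortedEigs_nonneg hW _
  have hsmax0 : 0 ≤ eigLE (Pᵀ*P) (p-1) := by rw [hsmax]; exact sortedEigs_nonneg hPtP _
  have hsmin0 : 0 ≤ eigLE (Pᵀ*P) 0 := by rw [hsmin]; exact sortedEigs_nonneg hPtP _
  have hsv_max : (svLE P (p-1))^2 = eigLE (Pᵀ*P) (p-1) := Real.sq_sqrt hsmax0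
  have hsv_min : (svLE P 0)^2 = eigLE (Pᵀ*P) 0 := Real.sq_sqrt hsmin0
  have hWle : ∀ i, hW.1.eigenvalues i ≤ eigLE W (p-1) := fun i => by
    rw [hwmax]; exact eig_le_sorted_last hW.1 hp i
  have hWge : ∀ i, eigLE W 0 ≤ hW.1.eigenvalues i := fun i => by
    rw [hwmin]; exact sorted_first_le_eig hW.1 hp i
  have hSle : ∀ i, hPtP.1.eigenvalues i ≤ eigLE (Pᵀ*P) (p-1) := fun i => by
    rw [hsmax]; exact eig_le_sorted_last hPtP.1 hp i
  have hSge : ∀ i, eigLE (Pᵀ*P) 0 ≤ hPtP.1.eigenvalues i := fun i => by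
    rw [hsmin]; exact sorted_first_le_eig hPtP.1 hp i
  have hhermN : ∀ c : ℝ, (c • (N*Nᴴ)).IsHermitian := fun c => by
    rw [Matrix.IsHermitian, conjTranspose_smul, star_trivial, hNNH.1.eq]
  have hhermA : ∀ c : ℝ, (c • (A*A)).IsHermitian := fun c => by
    rw [Matrix.IsHermitian, conjTranspose_smul, star_trivial, hAA.1.eq]
  -- upper bound steps
  have hstep1 : sortedEigs (N*W*Nᴴ) ℓ ≤ eigLE W (p-1) * sortedEigs (N*Nᴴ) ℓ := by
    have hdiff : (eigLE W (p-1) • (N*Nᴴ) - N*W*Nᴴ).PosSemidef := by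
      have h0 := (smul_one_sub_posSemidef hW.1 hWle).mul_mul_conjTranspose_same N
      have heq : N * (eigLE W (p-1) • (1 : Matrix (Fin p) (Fin p) ℝ) - W) * Nᴴ
          = eigLE W (p-1) • (N*Nᴴ) - N*W*Nᴴ := by
        rw [Matrix.mul_sub, Matrix.sub_mul, Matrix.mul_smul, Matrix.mul_one, Matrix.smul_mul]
      rwa [heq] at h0
    have h := weyl_mono (hhermN _) hNWN.1 hdiff ℓ
    rwa [sortedEigs_smul hNNH.1 hwmax0 ℓ] at h
  have hstep3 : sortedEigs (Nᴴ*N) ℓ ≤ eigLE (Pᵀ*P) (p-1) * sortedEigs (A*A) ℓ := by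
    have hdiff : (eigLE (Pᵀ*P) (p-1) • (A*A) - Nᴴ*N).PosSemidef := by
      have h0 := (smul_one_sub_posSemidef hPtP.1 hSle).mul_mul_conjTranspose_same A
      have heq : A * (eigLE (Pᵀ*P) (p-1) • (1 : Matrix (Fin p) (Fin p) ℝ) - Pᵀ*P) * Aᴴ
          = eigLE (Pᵀ*P) (p-1) • (A*A) - Nᴴ*N := by
        rw [Matrix.mul_sub, Matrix.sub_mul, Matrix.mul_smul, Matrix.mul_one, Matrix.smul_mul,
          hAH.eq, hNHNe]
      rwa [heq] at h0
    have h := weyl_mono (hhermA _) hNHN.1 hdiff ℓ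
    rwa [sortedEigs_smul hAA.1 hsmax0 ℓ] at h
  -- lower bound steps
  have hstep1' : eigLE W 0 * sortedEigs (N*Nᴴ) ℓ ≤ sortedEigs (N*W*Nᴴ) ℓ := by
    have hdiff : (N*W*Nᴴ - eigLE W 0 • (N*Nᴴ)).PosSemidef := by
      have h0 := (sub_smul_one_posSemidef hW.1 hWge).mul_mul_conjTranspose_same N
      have heq : N * (W - eigLE W 0 • (1 : Matrix (Fin p) (Fin p) ℝ)) * Nᴴ
          = N*W*Nᴴ - eigLE W 0 • (N*Nᴴ) := by
        rw [Matrix.mul_sub, Matrix.sub_mul, Matrix.mul_smul, Matrix.mul_one, Matrix.smul_mul]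
      rwa [heq] at h0
    have h := weyl_mono hNWN.1 (hhermN _) hdiff ℓ
    rwa [sortedEigs_smul hNNH.1 hwmin0 ℓ] at h
  have hstep3' : eigLE (Pᵀ*P) 0 * sortedEigs (A*A) ℓ ≤ sortedEigs (Nᴴ*N) ℓ := by
    have hdiff : (Nᴴ*N - eigLE (Pᵀ*P) 0 • (A*A)).PosSemidef := by
      have h0 := (sub_smul_one_posSemidef hPtP.1 hSge).mul_mul_conjTranspose_same A
      have heq : A * (Pᵀ*P - eigLE (Pᵀ*P) 0 • (1 : Matrix (Fin p) (Fin p) ℝ)) * Aᴴ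
          = Nᴴ*N - eigLE (Pᵀ*P) 0 • (A*A) := by
        rw [Matrix.mul_sub, Matrix.sub_mul, Matrix.mul_smul, Matrix.mul_one, Matrix.smul_mul,
          hAH.eq, hNHNe]
      rwa [heq] at h0
    have h := weyl_mono hNHN.1 (hhermA _) hdiff ℓ
    rwa [sortedEigs_smul hAA.1 hsmin0 ℓ] at h
  constructor
  · calc sortedEigs (A*A) ℓ * eigLE W 0 * (svLE P 0)^2
        = eigLE W 0 * (eigLE (Pᵀ*P) 0 * sortedEigs (A*A) ℓ) := by rw [hsv_min]; ring
      _ ≤ eigLE W 0 * sortedEigs (Nᴴ*N) ℓ := mul_le_mul_of_nonneg_left hstep3' hwmin0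
      _ = eigLE W 0 * sortedEigs (N*Nᴴ) ℓ := by rw [hflip]
      _ ≤ sortedEigs (N*W*Nᴴ) ℓ := hstep1'
      _ = sortedEigs (P * A * W * A * Pᵀ) ℓ := by rw [hMN]
  · calc sortedEigs (P * A * W * A * Pᵀ) ℓ
        = sortedEigs (N*W*Nᴴ) ℓ := by rw [hMN]
      _ ≤ eigLE W (p-1) * sortedEigs (N*Nᴴ) ℓ := hstep1
      _ = eigLE W (p-1) * sortedEigs (Nᴴ*N) ℓ := by rw [hflip]
      _ ≤ eigLE W (p-1) * (eigLE (Pᵀ*P) (p-1) * sortedEigs (A*A) ℓ) :=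
          mul_le_mul_of_nonneg_left hstep3 hwmax0
      _ = sortedEigs (A*A) ℓ * eigLE W (p-1) * (svLE P (p-1))^2 := by rw [hsv_max]; ring
end
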